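/- (Theorem 2.5 of the paper in the case μ = 0, classical Fourier transform.) Assume in addition that ψ̂(t) > 0 for almost every t ∈ ℝⁿ. Let f : ℝⁿ → ℝ be integrable with an integrable Fourier transform f̂ satisfying f(x) = (2π)^{−n} ∫_{ℝⁿ} e^{i⟨x,t⟩} f̂(t) dt for all x, and suppose c_f² := (2π)^{−n} ∫_{ℝⁿ} |f̂(t)|² (ψ̂(t))^{−1} dt < ∞. Let u_1, …, u_M be the Lagrange basis functions, i.e. (u_1(x), …, u_M(x))ᵀ = U(x) where U(x), V(x) is the unique solution of A U(x) + P V(x) = R(x), Pᵀ U(x) = S(x), with R(x) := (ψ(x − x_1), …, ψ(x − x_M))ᵀ and S(x) := (p_1(x), …, p_Q(x))ᵀ, and let s(x) := Σ_{j=1}^M f(x_j) u_j(x) be the interpolant of f. Then for every x ∈ ℝⁿ, |s(x) − f(x)| ≤ κ_q(x) · c_f, where κ_q(x)² := min{ Uᵀ A U − 2 Uᵀ R(x) + ψ(0) : U ∈ ℝ^M, Pᵀ U = S(x) }. -/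

import Mathlib

open MeasureTheory Matrix

/-- e^{i⟨y,t⟩}, with the Euclidean inner product on ℝⁿ. -/
noncomputable def expI {n : ℕ} (y t : EuclideanSpace ℝ (Fin n)) : ℂ :=
  Complex.exp (Complex.I * ((inner ℝ y t : ℝ) : ℂ))

/-- The constant (2π)^{−n}. -/
noncomputable def c2pin (n : ℕ) : ℝ := ((2 * Real.pi) ^ n)⁻¹

lemma expI_norm {n : ℕ} (y t : EuclideanSpace ℝ (Fin n)) : ‖expI y t‖ = 1 := by
  simp [expI, Complex.norm_exp, Complex.mul_re]

lemma expI_continuous {n : ℕ} (y : EuclideanSpace ℝ (Fin n)) : Continuous (expI y) := by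
  unfold expI
  exact Complex.continuous_exp.comp <| continuous_const.mul <|
    Complex.continuous_ofReal.comp <| Continuous.inner continuous_const continuous_id

lemma expI_mul_expI {n : ℕ} (y z t : EuclideanSpace ℝ (Fin n)) :
    expI y t * expI z t = expI (y + z) t := by
  unfold expI
  rw [← Complex.exp_add]
  congr 1
  rw [inner_add_left]
  push_cast
  ring

lemma conj_expI {n : ℕ} (y t : EuclideanSpace ℝ (Fin n)) :
    (starRingEnd ℂ) (expI y t) = expI (-y) t := by
  unfold expI
  rw [← Complex.exp_conj]
  congr 1
  rw [inner_neg_left]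
  simp [_root_.map_mul, Complex.conj_I, Complex.conj_ofReal]

lemma expI_zero {n : ℕ} (t : EuclideanSpace ℝ (Fin n)) : expI 0 t = 1 := by
  simp [expI]

lemma amgm_pt (G F p l : ℝ) (hG : 0 ≤ G) (hF : 0 ≤ F) (hp : 0 < p) (hl : 0 < l) :
    G * F ≤ (l * (G^2 * p) + (F^2 * p⁻¹) / l) / 2 := by
  rw [le_div_iff₀ (by norm_num : (0:ℝ) < 2)]
  have hkey := sq_nonneg (l * p * G - F)
  have h3 : F^2 * p⁻¹ / l * (l * p) = F^2 := by
    field_simp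
  nlinarith [mul_pos hl hp, hkey, h3, sq_nonneg (l*p*G + F)]

lemma amgm_bound (a K C : ℝ) (hK : 0 ≤ K) (hC : 0 ≤ C)
    (h : ∀ l : ℝ, 0 < l → a ≤ (l * K + C / l) / 2) :
    a ≤ Real.sqrt K * Real.sqrt C := by
  have hge : (0:ℝ) ≤ Real.sqrt K * Real.sqrt C := by positivity
  rcases eq_or_lt_of_le hK with hK0 | hKpos
  · have h0 : a ≤ 0 := by
      by_contra hna
      push_neg at hna
      have h1 := h ((C + 1) / a) (by positivity)
      rw [← hK0] at h1
      have h2 : C / ((C + 1) / a) = C * a / (C + 1) := by field_simp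
      rw [h2] at h1
      have h4 : C * a / (C + 1) < a := by
        rw [div_lt_iff₀ (by linarith)]
        nlinarith
      linarith
    linarith
  rcases eq_or_lt_of_le hC with hC0 | hCpos
  · have h0 : a ≤ 0 := by
      by_contra hna
      push_neg at hna
      have h1 := h (a / (K + 1)) (by positivity)
      rw [← hC0] at h1
      have h2 : (0:ℝ) / (a / (K+1)) = 0 := by simp
      rw [h2] at h1
      have h4 : a / (K + 1) * K < a := by
        rw [div_mul_eq_mul_div, div_lt_iff₀ (by linarith)]
        nlinarith
      linarith
    linarith
  · have h1 := h (Real.sqrt C / Real.sqrt K) (by positivity)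
    have hsK : Real.sqrt K ^ 2 = K := Real.sq_sqrt hK
    have hsC : Real.sqrt C ^ 2 = C := Real.sq_sqrt hC
    have hsKpos : 0 < Real.sqrt K := Real.sqrt_pos.2 hKpos
    have hsCpos : 0 < Real.sqrt C := Real.sqrt_pos.2 hCpos
    have heq : Real.sqrt C / Real.sqrt K * K + C / (Real.sqrt C / Real.sqrt K)
        = 2 * (Real.sqrt K * Real.sqrt C) := by
      field_simp
      nlinarith [hsK, hsC]
    rw [heq] at h1
    linarith

/-- Theorem 2.5 of the paper in the case μ = 0: for the interpolant
s(x) = Σ_j f(x_j) u_j(x) built from the Lagrange basis functions u_j, the error satisfies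
|s(x) − f(x)| ≤ κ_q(x) · c_f, where κ_q(x)² is the minimum of the Kriging quadratic form
and c_f² = (2π)^{−n} ∫ |f̂(t)|² (ψ̂(t))⁻¹ dt. -/
theorem wu_schaback_error_bound_mu_zero
    (n M q Q : ℕ) (hn : 0 < n) (hM : 0 < M) (hq : 0 < q)
    (x : Fin M → EuclideanSpace ℝ (Fin n))
    (hx : Function.Injective x)
    (pb : Fin Q → MvPolynomial (Fin n) ℝ)
    (hdeg : ∀ i, (pb i).totalDegree < q)
    (hind : LinearIndependent ℝ pb)
    (hspan : ∀ p : MvPolynomial (Fin n) ℝ, p.totalDegree < q →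
      p ∈ Submodule.span ℝ (Set.range pb))
    (huni : ∀ p : MvPolynomial (Fin n) ℝ, p.totalDegree < q →
      (∀ j, MvPolynomial.eval (fun l => x j l) p = 0) → p = 0)
    (ψ : EuclideanSpace ℝ (Fin n) → ℝ) (hψcont : Continuous ψ)
    (ψhat : EuclideanSpace ℝ (Fin n) → ℝ)
    (hψhat_nonneg : ∀ t, 0 ≤ ψhat t)
    (hψhat_int : Integrable ψhat)
    (hψhat_pos : ∀ᵐ t : EuclideanSpace ℝ (Fin n), 0 < ψhat t)
    (hψinv : ∀ y : EuclideanSpace ℝ (Fin n),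
      (ψ y : ℂ) = (c2pin n : ℂ) * ∫ t, expI y t * (ψhat t : ℂ))
    (hcpd : ∀ c : Fin M → ℝ, c ≠ 0 →
      (∀ p : MvPolynomial (Fin n) ℝ, p.totalDegree < q →
        ∑ j, c j * MvPolynomial.eval (fun l => x j l) p = 0) →
      0 < ∑ j, ∑ k, c j * c k * ψ (x j - x k))
    (A : Matrix (Fin M) (Fin M) ℝ) (hA : ∀ j k, A j k = ψ (x j - x k))
    (P : Matrix (Fin M) (Fin Q) ℝ)
    (hP : ∀ j i, P j i = MvPolynomial.eval (fun l => x j l) (pb i))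
    -- the approximated function f and its Fourier transform
    (f : EuclideanSpace ℝ (Fin n) → ℝ) (hf_int : Integrable f)
    (fhat : EuclideanSpace ℝ (Fin n) → ℂ) (hfhat_int : Integrable fhat)
    (hfinv : ∀ y : EuclideanSpace ℝ (Fin n),
      (f y : ℂ) = (c2pin n : ℂ) * ∫ t, expI y t * fhat t)
    (hcf_fin : Integrable (fun t : EuclideanSpace ℝ (Fin n) => ‖fhat t‖ ^ 2 * (ψhat t)⁻¹))
    -- the Lagrange basis functions u_j, given through U(x), V(x)
    (U : EuclideanSpace ℝ (Fin n) → Fin M → ℝ)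
    (V : EuclideanSpace ℝ (Fin n) → Fin Q → ℝ)
    (hUV : ∀ y : EuclideanSpace ℝ (Fin n),
      A *ᵥ U y + P *ᵥ V y = (fun j => ψ (y - x j)) ∧
      Pᵀ *ᵥ U y = (fun i => MvPolynomial.eval (fun l => y l) (pb i))) :
    ∀ x₀ : EuclideanSpace ℝ (Fin n), ∀ κsq : ℝ,
      IsLeast {v : ℝ | ∃ W : Fin M → ℝ,
          Pᵀ *ᵥ W = (fun i => MvPolynomial.eval (fun l => x₀ l) (pb i)) ∧
          v = W ⬝ᵥ (A *ᵥ W) - 2 * (W ⬝ᵥ (fun j => ψ (x₀ - x j))) + ψ 0} κsq →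
      |(∑ j, f (x j) * U x₀ j) - f x₀| ≤
        Real.sqrt κsq * Real.sqrt (c2pin n * ∫ t, ‖fhat t‖ ^ 2 * (ψhat t)⁻¹) := by
  intro x₀ κsq hκ
  obtain ⟨⟨W₀, hW₀c, hW₀v⟩, hlb⟩ := hκ
  have hc0 : (0:ℝ) ≤ c2pin n := by unfold c2pin; positivity
  set c : ℝ := c2pin n with hcdef
  set W : Fin M → ℝ := U x₀ with hWdef
  set Rv : Fin M → ℝ := fun j => ψ (x₀ - x j) with hRvdef
  set Sv : Fin Q → ℝ := fun i => MvPolynomial.eval (fun l => x₀ l) (pb i) with hSvdef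
  set z : Fin (M+1) → EuclideanSpace ℝ (Fin n) := Fin.snoc x x₀ with hzdef
  set a : Fin (M+1) → ℝ := Fin.snoc W (-1) with hadef
  set g : EuclideanSpace ℝ (Fin n) → ℂ := fun t => ∑ j, (a j : ℂ) * expI (z j) t with hgdef
  have hgc : Continuous g := continuous_finset_sum _ fun j _ =>
    continuous_const.mul (expI_continuous _)
  set B : ℝ := ∑ j, |a j| with hBdef
  have hgbd : ∀ t, ‖g t‖ ≤ B := by
    intro t
    calc ‖g t‖ ≤ ∑ j, ‖(a j : ℂ) * expI (z j) t‖ := norm_sum_le _ _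
      _ = B := by simp only [norm_mul, expI_norm, mul_one, Complex.norm_real, Real.norm_eq_abs, hBdef]
  -- integrability
  have hψC : Integrable (fun t => ((ψhat t : ℝ) : ℂ)) := hψhat_int.ofReal
  have hexpψ : ∀ y, Integrable fun t => expI y t * (ψhat t : ℂ) := fun y =>
    hψC.bdd_mul (expI_continuous y).aestronglyMeasurable (c := 1) (ae_of_all _ fun t => (expI_norm y t).le)
  have hexpf : ∀ y, Integrable fun t => expI y t * fhat t := fun y =>
    hfhat_int.bdd_mul (expI_continuous y).aestronglyMeasurable (c := 1) (ae_of_all _ fun t => (expI_norm y t).le)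
  have hgf : Integrable fun t => g t * fhat t :=
    hfhat_int.bdd_mul hgc.aestronglyMeasurable (c := B) (ae_of_all _ hgbd)
  have hg2ψ : Integrable fun t => ‖g t‖^2 * ψhat t := by
    refine hψhat_int.bdd_mul ((hgc.norm.pow 2)).aestronglyMeasurable (c := B^2) (ae_of_all _ fun t => ?_)
    have h1 := hgbd t
    have h0 : (0:ℝ) ≤ ‖g t‖ := norm_nonneg _
    rw [Real.norm_eq_abs, abs_of_nonneg (by positivity)]
    nlinarith
  -- ψ is even
  have hψeven : ∀ y, ψ (-y) = ψ y := by
    intro y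
    have h3 : ((ψ (-y) : ℝ) : ℂ) = ((ψ y : ℝ) : ℂ) := by
      calc ((ψ (-y):ℝ):ℂ) = (c:ℂ) * ∫ t, expI (-y) t * (ψhat t:ℂ) := hψinv (-y)
        _ = (c:ℂ) * (starRingEnd ℂ) (∫ t, expI y t * (ψhat t:ℂ)) := by
            rw [← integral_conj]
            simp_rw [_root_.map_mul, conj_expI, Complex.conj_ofReal]
        _ = (starRingEnd ℂ) ((c:ℂ) * ∫ t, expI y t * (ψhat t:ℂ)) := by
            rw [_root_.map_mul, Complex.conj_ofReal]
        _ = (starRingEnd ℂ) ((ψ y:ℝ):ℂ) := by rw [← hψinv y]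
        _ = ((ψ y:ℝ):ℂ) := Complex.conj_ofReal _
    exact_mod_cast h3
  -- error representation
  have hinterr : ∫ t, g t * fhat t = ∑ j, (a j : ℂ) * ∫ t, expI (z j) t * fhat t := by
    calc ∫ t, g t * fhat t = ∫ t, ∑ j, (a j:ℂ) * (expI (z j) t * fhat t) := by
          simp_rw [hgdef, Finset.sum_mul, mul_assoc]
      _ = ∑ j, ∫ t, (a j:ℂ) * (expI (z j) t * fhat t) :=
          integral_finset_sum _ fun j _ => (hexpf (z j)).const_mul _
      _ = ∑ j, (a j:ℂ) * ∫ t, expI (z j) t * fhat t := by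
          simp_rw [integral_const_mul]
  have hsumaf : ∑ j : Fin (M+1), (a j:ℂ) * (f (z j):ℂ)
      = (((∑ j, f (x j) * U x₀ j) - f x₀ : ℝ) : ℂ) := by
    rw [Fin.sum_univ_castSucc]
    simp only [hadef, hzdef, Fin.snoc_castSucc, Fin.snoc_last]
    push_cast
    rw [Finset.sum_congr rfl fun j (_ : j ∈ Finset.univ) =>
      mul_comm ((W j : ℂ)) ((f (x j):ℂ))]
    rw [hWdef]
    ring
  have herr : (((∑ j, f (x j) * U x₀ j) - f x₀ : ℝ) : ℂ) = (c:ℂ) * ∫ t, g t * fhat t := by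
    rw [hinterr, Finset.mul_sum, ← hsumaf]
    refine Finset.sum_congr rfl fun j _ => ?_
    rw [hfinv (z j)]
    ring
  -- the key quadratic identity
  have hptψ : ∀ t, ((‖g t‖^2 * ψhat t : ℝ) : ℂ)
      = ∑ j, ∑ k, ((a j * a k : ℝ):ℂ) * (expI (z j - z k) t * (ψhat t:ℂ)) := by
    intro t
    have h1 : ((‖g t‖^2 : ℝ):ℂ) = g t * (starRingEnd ℂ) (g t) := by
      rw [Complex.mul_conj, Complex.normSq_eq_norm_sq]
    have h2 : (starRingEnd ℂ) (g t) = ∑ k, ((a k:ℝ):ℂ) * expI (-(z k)) t := by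
      simp only [hgdef, map_sum, _root_.map_mul, Complex.conj_ofReal, conj_expI]
    calc ((‖g t‖^2 * ψhat t : ℝ):ℂ) = (g t * (starRingEnd ℂ) (g t)) * (ψhat t:ℂ) := by
          push_cast [← h1]; ring
      _ = (∑ j, (a j:ℂ) * expI (z j) t) * (∑ k, ((a k:ℝ):ℂ) * expI (-(z k)) t) * (ψhat t:ℂ) := by
          rw [h2, hgdef]
      _ = ∑ j, ∑ k, ((a j * a k:ℝ):ℂ) * (expI (z j - z k) t * (ψhat t:ℂ)) := by
          rw [Finset.sum_mul_sum, Finset.sum_mul]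
          refine Finset.sum_congr rfl fun j _ => ?_
          rw [Finset.sum_mul]
          refine Finset.sum_congr rfl fun k _ => ?_
          have hE := expI_mul_expI (z j) (-(z k)) t
          rw [← sub_eq_add_neg] at hE
          push_cast
          linear_combination ((a j : ℂ) * (a k:ℂ) * ((ψhat t:ℝ):ℂ)) * hE
  have hKint : ((∫ t, ‖g t‖^2 * ψhat t : ℝ):ℂ)
      = ∑ j, ∑ k, ((a j * a k:ℝ):ℂ) * ∫ t, expI (z j - z k) t * (ψhat t:ℂ) := by
    calc ((∫ t, ‖g t‖^2 * ψhat t : ℝ):ℂ)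
        = ∫ t, ((‖g t‖^2 * ψhat t : ℝ):ℂ) := integral_ofReal.symm
      _ = ∫ t, ∑ j, ∑ k, ((a j * a k:ℝ):ℂ) * (expI (z j - z k) t * (ψhat t:ℂ)) := by
          simp only [hptψ]
      _ = ∑ j, ∑ k, ((a j * a k:ℝ):ℂ) * ∫ t, expI (z j - z k) t * (ψhat t:ℂ) := by
          rw [integral_finset_sum _ fun j _ =>
            integrable_finset_sum _ fun k _ => (hexpψ _).const_mul _]
          refine Finset.sum_congr rfl fun j _ => ?_
          rw [integral_finset_sum _ fun k _ => (hexpψ _).const_mul _]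
          exact Finset.sum_congr rfl fun k _ => integral_const_mul _ _
  have hKC : (c * ∫ t, ‖g t‖^2 * ψhat t : ℝ) = ∑ j, ∑ k, a j * a k * ψ (z j - z k) := by
    have hcx : ((c * ∫ t, ‖g t‖^2 * ψhat t : ℝ):ℂ)
        = ((∑ j, ∑ k, a j * a k * ψ (z j - z k) : ℝ):ℂ) := by
      push_cast [hKint]
      rw [Finset.mul_sum]
      refine Finset.sum_congr rfl fun j _ => ?_
      rw [Finset.mul_sum]
      refine Finset.sum_congr rfl fun k _ => ?_
      rw [hψinv (z j - z k)]
      push_cast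
      ring
    exact_mod_cast hcx
  -- split the double sum
  have he : ∀ j, ψ (x j - x₀) = ψ (x₀ - x j) := fun j => by
    rw [← hψeven (x₀ - x j), neg_sub]
  have hq1 : W ⬝ᵥ (A *ᵥ W) = ∑ j, ∑ k, W j * W k * ψ (x j - x k) := by
    simp only [dotProduct, mulVec, hA, Finset.mul_sum]
    exact Finset.sum_congr rfl fun j _ => Finset.sum_congr rfl fun k _ => by ring
  have hq2 : W ⬝ᵥ Rv = ∑ j, W j * ψ (x₀ - x j) := by
    simp only [dotProduct, hRvdef]
  have hsplit : (∑ j : Fin (M+1), ∑ k : Fin (M+1), a j * a k * ψ (z j - z k))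
      = W ⬝ᵥ (A *ᵥ W) - 2 * (W ⬝ᵥ Rv) + ψ 0 := by
    have hinner : ∀ j : Fin M,
        (∑ k : Fin (M+1), a (Fin.castSucc j) * a k * ψ (z (Fin.castSucc j) - z k))
        = (∑ k : Fin M, W j * W k * ψ (x j - x k)) - W j * ψ (x₀ - x j) := by
      intro j
      rw [Fin.sum_univ_castSucc]
      simp only [hadef, hzdef, Fin.snoc_castSucc, Fin.snoc_last]
      rw [he j]
      ring
    have hlast : (∑ k : Fin (M+1), a (Fin.last M) * a k * ψ (z (Fin.last M) - z k))
        = -(∑ k : Fin M, W k * ψ (x₀ - x k)) + ψ 0 := by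
      rw [Fin.sum_univ_castSucc]
      simp only [hadef, hzdef, Fin.snoc_castSucc, Fin.snoc_last, sub_self]
      rw [← Finset.sum_neg_distrib]
      congr 1
      · exact Finset.sum_congr rfl fun k _ => by ring
      · ring
    rw [Fin.sum_univ_castSucc, Finset.sum_congr rfl fun j _ => hinner j, hlast,
      Finset.sum_sub_distrib, hq1, hq2]
    have : (∑ j, W j * ψ (x₀ - x j)) = W ⬝ᵥ Rv := hq2.symm
    rw [this]
    ring
  have hKQ : c * ∫ t, ‖g t‖^2 * ψhat t = W ⬝ᵥ (A *ᵥ W) - 2 * (W ⬝ᵥ Rv) + ψ 0 := by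
    rw [hKC, hsplit]
  -- Kriging optimality : quadratic form at W is ≤ κsq
  have hPW : Pᵀ *ᵥ W = Sv := by rw [hWdef, hSvdef]; exact (hUV x₀).2
  set d : Fin M → ℝ := W₀ - W with hddef
  have hPd : Pᵀ *ᵥ d = 0 := by
    rw [hddef, Matrix.mulVec_sub, hPW, hW₀c]
    simp
  have hmom : ∀ p : MvPolynomial (Fin n) ℝ, p.totalDegree < q →
      ∑ j, d j * MvPolynomial.eval (fun l => x j l) p = 0 := by
    intro p hp
    have hmem := hspan p hp
    clear hp
    induction hmem using Submodule.span_induction with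
    | mem pp hpp =>
      obtain ⟨i, rfl⟩ := hpp
      have := congrFun hPd i
      simp only [mulVec, dotProduct, transpose_apply, hP, Pi.zero_apply] at this
      rw [← this]
      exact Finset.sum_congr rfl fun j _ => by rw [mul_comm]
    | zero => simp
    | add pp qq _ _ h1 h2 =>
      simp only [map_add, mul_add, Finset.sum_add_distrib]
      rw [h1, h2, add_zero]
    | smul r pp _ h1 =>
      simp only [MvPolynomial.smul_eval]
      rw [Finset.sum_congr rfl fun j (_ : j ∈ Finset.univ) => by
        rw [show d j * (r * MvPolynomial.eval (fun l => x j l) pp)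
          = r * (d j * MvPolynomial.eval (fun l => x j l) pp) from by ring],
        ← Finset.mul_sum, h1, mul_zero]
  have hdAd : 0 ≤ d ⬝ᵥ (A *ᵥ d) := by
    rcases eq_or_ne d 0 with h0 | h0
    · simp [h0]
    · have hpos := hcpd d h0 hmom
      have heq : d ⬝ᵥ (A *ᵥ d) = ∑ j, ∑ k, d j * d k * ψ (x j - x k) := by
        simp only [dotProduct, mulVec, hA, Finset.mul_sum]
        exact Finset.sum_congr rfl fun j _ => Finset.sum_congr rfl fun k _ => by ring
      rw [heq]
      exact hpos.le
  have hsymm : ∀ v w : Fin M → ℝ, v ⬝ᵥ (A *ᵥ w) = w ⬝ᵥ (A *ᵥ v) := by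
    intro v w
    have hAT : Aᵀ = A := by
      ext j k
      rw [transpose_apply, hA, hA, ← hψeven (x j - x k), neg_sub]
    rw [dotProduct_mulVec]
    conv_lhs => rw [← hAT]
    rw [vecMul_transpose, dotProduct_comm]
  have hW₀W : W₀ = W + d := by rw [hddef]; ring
  have hQle : W ⬝ᵥ (A *ᵥ W) - 2 * (W ⬝ᵥ Rv) + ψ 0 ≤ κsq := by
    rw [hW₀v]
    have hd1 : W₀ ⬝ᵥ (A *ᵥ W₀) = W ⬝ᵥ (A *ᵥ W) + 2 * (d ⬝ᵥ (A *ᵥ W)) + d ⬝ᵥ (A *ᵥ d) := by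
      rw [hW₀W, Matrix.mulVec_add, dotProduct_add, add_dotProduct, add_dotProduct,
        hsymm W d]
      ring
    have hd2 : W₀ ⬝ᵥ Rv = W ⬝ᵥ Rv + d ⬝ᵥ Rv := by rw [hW₀W, add_dotProduct]
    have hd3 : d ⬝ᵥ (A *ᵥ W) = d ⬝ᵥ Rv := by
      have h1 : A *ᵥ W + P *ᵥ V x₀ = Rv := by rw [hWdef, hRvdef]; exact (hUV x₀).1
      have h2 : d ⬝ᵥ (P *ᵥ V x₀) = 0 := by
        rw [dotProduct_mulVec]
        have h3 : d ᵥ* P = Pᵀ *ᵥ d := by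
          conv_lhs => rw [← transpose_transpose P]
          rw [vecMul_transpose]
        rw [h3, hPd, zero_dotProduct]
      have h4 := congrArg (fun v => d ⬝ᵥ v) h1
      simp only [dotProduct_add, h2, add_zero] at h4
      exact h4
    rw [hd1, hd2]
    nlinarith [hdAd, hd3]
  -- final assembly
  set X : ℝ := ∫ t, ‖g t‖^2 * ψhat t with hXdef
  set Y : ℝ := ∫ t, ‖fhat t‖^2 * (ψhat t)⁻¹ with hYdef
  have hX0 : 0 ≤ X := integral_nonneg fun t => mul_nonneg (by positivity) (hψhat_nonneg t)
  have hY0 : 0 ≤ Y := integral_nonneg fun t => mul_nonneg (by positivity) (inv_nonneg.2 (hψhat_nonneg t))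
  have hbound : ∀ l : ℝ, 0 < l →
      |(∑ j, f (x j) * U x₀ j) - f x₀| ≤ (l * (c*X) + (c*Y) / l) / 2 := by
    intro l hl
    have h1 : |(∑ j, f (x j) * U x₀ j) - f x₀|
        = ‖(((∑ j, f (x j) * U x₀ j) - f x₀ : ℝ):ℂ)‖ := by
      rw [Complex.norm_real, Real.norm_eq_abs]
    rw [h1, herr]
    calc ‖(c:ℂ) * ∫ t, g t * fhat t‖ = c * ‖∫ t, g t * fhat t‖ := by
          rw [norm_mul, Complex.norm_real, Real.norm_eq_abs, abs_of_nonneg hc0]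
      _ ≤ c * ∫ t, ‖g t * fhat t‖ :=
          mul_le_mul_of_nonneg_left (norm_integral_le_integral_norm _) hc0
      _ ≤ c * ((l * X + Y / l) / 2) := by
          refine mul_le_mul_of_nonneg_left ?_ hc0
          have hae : (fun t => ‖g t * fhat t‖) ≤ᵐ[volume]
              fun t => (l * (‖g t‖^2 * ψhat t) + (‖fhat t‖^2 * (ψhat t)⁻¹) / l) / 2 := by
            filter_upwards [hψhat_pos] with t hpt
            rw [norm_mul]
            exact amgm_pt _ _ _ _ (norm_nonneg _) (norm_nonneg _) hpt hl
          have hint1 : Integrable (fun t => ‖g t * fhat t‖) := hgf.norm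
          have hint2 : Integrable (fun t =>
              (l * (‖g t‖^2 * ψhat t) + (‖fhat t‖^2 * (ψhat t)⁻¹) / l) / 2) :=
            (((hg2ψ.const_mul l).add (hcf_fin.div_const l)).div_const 2)
          calc ∫ t, ‖g t * fhat t‖
              ≤ ∫ t, (l * (‖g t‖^2 * ψhat t) + (‖fhat t‖^2 * (ψhat t)⁻¹) / l) / 2 :=
                integral_mono_ae hint1 hint2 hae
            _ = (l * X + Y / l) / 2 := by
                rw [integral_div, integral_add (hg2ψ.const_mul l) (hcf_fin.div_const l),
                  integral_const_mul, integral_div]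
      _ = (l * (c*X) + (c*Y)/l)/2 := by ring
  have hfin := amgm_bound _ (c*X) (c*Y) (mul_nonneg hc0 hX0) (mul_nonneg hc0 hY0) hbound
  have hle : c * X ≤ κsq := le_trans (le_of_eq hKQ) hQle
  calc |(∑ j, f (x j) * U x₀ j) - f x₀| ≤ Real.sqrt (c*X) * Real.sqrt (c*Y) := hfin
    _ ≤ Real.sqrt κsq * Real.sqrt (c*Y) :=
        mul_le_mul_of_nonneg_right (Real.sqrt_le_sqrt hle) (Real.sqrt_nonneg _)
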